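/- Let 1 ≤ p ≤ 2 and let p' be the Hölder conjugate of p. Let v ∈ ℝ^n have at most s ≥ 1 nonzero entries, with ‖v‖₂ ≤ 1 and ‖v‖_∞ ≤ C · s^{−1/2} for some C > 0. Then ‖v‖_p · ‖v‖_{p'} ≤ C. -/

import Mathlib

open scoped ENNReal

/-- The `ℓ_p` norm on `ℝ^n`, for `p ∈ [1, ∞]` (extended-real exponent). -/
noncomputable def lpNorm {n : ℕ} (p : ℝ≥0∞) (x : Fin n → ℝ) : ℝ :=
  if p = ∞ then ⨆ j, |x j| else (∑ j, |x j| ^ p.toReal) ^ (1 / p.toReal)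

set_option maxHeartbeats 1600000 in
/-- let `1 ≤ p ≤ 2` with Hölder conjugate `q` (`1/p + 1/q = 1`, with
`q = ∞` when `p = 1`).  If `v ∈ ℝ^n` has at most `s ≥ 1` nonzero entries,
`‖v‖₂ ≤ 1` and `‖v‖_∞ ≤ C · s^{−1/2}` for some `C > 0`, then
`‖v‖_p · ‖v‖_q ≤ C`. -/
theorem stmt3 {n : ℕ} (p q : ℝ≥0∞) (hp1 : 1 ≤ p) (hp2 : p ≤ 2)
    (hpq : 1 / p + 1 / q = 1)
    (v : Fin n → ℝ) (s : ℕ) (hs : 1 ≤ s)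
    (hsupp : ({j | v j ≠ 0} : Set (Fin n)).ncard ≤ s)
    (h2 : lpNorm 2 v ≤ 1)
    (C : ℝ) (hC : 0 < C)
    (hinf : lpNorm ∞ v ≤ C * (s : ℝ) ^ (-(1 : ℝ) / 2)) :
    lpNorm p v * lpNorm q v ≤ C := by
  have hpx : p ≠ ∞ := by
    intro h; rw [h] at hp2; exact (by simp : ¬ ((⊤:ℝ≥0∞) ≤ 2)) hp2
  set t : ℝ := p.toReal with ht_def
  have ht1 : 1 ≤ t := by
    have := ENNReal.toReal_mono hpx hp1
    simpa using this
  have ht2 : t ≤ 2 := by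
    have := ENNReal.toReal_mono (by norm_num) hp2
    simpa using this
  have ht0 : 0 < t := lt_of_lt_of_le one_pos ht1
  -- support finset
  set S : Finset (Fin n) := Finset.univ.filter (fun j => v j ≠ 0) with hS_def
  have hScard : (S.card : ℝ) ≤ s := by
    have : ({j | v j ≠ 0} : Set (Fin n)) = ↑S := by ext j; simp [hS_def]
    rw [this, Set.ncard_coe_finset] at hsupp
    exact_mod_cast hsupp
  have hs0 : (0:ℝ) < s := by exact_mod_cast hs
  -- basic quantities
  set D : ℝ := ⨆ j, |v j| with hD_def
  set A : ℝ := ∑ j, |v j| ^ (2:ℝ) with hA_def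
  set B : ℝ := A ^ ((1:ℝ)/2) with hB_def
  have hA0 : 0 ≤ A := Finset.sum_nonneg fun j _ => Real.rpow_nonneg (abs_nonneg _) _
  have hB0 : 0 ≤ B := Real.rpow_nonneg hA0 _
  have hD0 : 0 ≤ D := Real.iSup_nonneg fun j => abs_nonneg _
  have hvD : ∀ j, |v j| ≤ D := fun j =>
    le_ciSup (f := fun j => |v j|) (Set.Finite.bddAbove (Set.finite_range _)) j
  have hB2 : lpNorm 2 v = B := by
    simp only [lpNorm, hB_def, hA_def]
    norm_num
  have hB1 : B ≤ 1 := by rw [hB2] at h2; exact h2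
  have hDC : D ≤ C * (s:ℝ) ^ (-(1:ℝ)/2) := by
    simpa [lpNorm, hD_def] using hinf
  have hAS : A = ∑ j ∈ S, |v j| ^ (2:ℝ) := by
    rw [hA_def]
    refine (Finset.sum_subset (Finset.subset_univ S) ?_).symm
    intro j _ hj
    have hv0 : v j = 0 := by simpa [hS_def] using hj
    simp [hv0, Real.zero_rpow (by norm_num : (2:ℝ) ≠ 0)]
  -- B squared equals A
  have hBA : B ^ (2:ℝ) = A := by
    rw [hB_def, ← Real.rpow_mul hA0]
    norm_num
  -- A ≤ s * D^2
  have hAs : A ≤ (s:ℝ) * D ^ (2:ℝ) := by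
    calc A = ∑ j ∈ S, |v j| ^ (2:ℝ) := hAS
      _ ≤ ∑ _j ∈ S, D ^ (2:ℝ) :=
          Finset.sum_le_sum fun j _ => Real.rpow_le_rpow (abs_nonneg _) (hvD j) (by norm_num)
      _ = (S.card : ℝ) * D ^ (2:ℝ) := by rw [Finset.sum_const, nsmul_eq_mul]
      _ ≤ (s:ℝ) * D ^ (2:ℝ) :=
          mul_le_mul_of_nonneg_right hScard (Real.rpow_nonneg hD0 _)
  have hBC : B ≤ C := by
    have h1 : B ^ (2:ℝ) ≤ C ^ (2:ℝ) := by
      rw [hBA]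
      calc A ≤ (s:ℝ) * D ^ (2:ℝ) := hAs
        _ ≤ (s:ℝ) * (C * (s:ℝ) ^ (-(1:ℝ)/2)) ^ (2:ℝ) := by
            apply mul_le_mul_of_nonneg_left _ hs0.le
            exact Real.rpow_le_rpow hD0 hDC (by norm_num)
        _ = C ^ (2:ℝ) := by
            rw [Real.mul_rpow hC.le (Real.rpow_nonneg hs0.le _),
              ← Real.rpow_mul hs0.le]
            norm_num
            rw [Real.rpow_neg_one]
            field_simp
    rw [show (2:ℝ) = ((2:ℕ):ℝ) by norm_num, Real.rpow_natCast, Real.rpow_natCast] at h1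
    exact (pow_le_pow_iff_left₀ hB0 hC.le two_ne_zero).mp h1
  -- claim P
  have hP : lpNorm p v ≤ (s:ℝ) ^ (1/t - 1/2) * B := by
    have hr : (1:ℝ) ≤ 2 / t := by
      rw [le_div_iff₀ ht0]; linarith
    have key := Real.inner_le_weight_mul_Lp_of_nonneg S hr (fun _ => (1:ℝ))
      (fun j => |v j| ^ t) (fun _ => zero_le_one)
      (fun j => Real.rpow_nonneg (abs_nonneg _) _)
    simp only [one_mul] at key
    have e1 : ∀ j, (|v j| ^ t) ^ ((2:ℝ)/t) = |v j| ^ (2:ℝ) := by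
      intro j
      rw [← Real.rpow_mul (abs_nonneg _)]
      congr 1
      field_simp
    have e2 : ((2:ℝ)/t)⁻¹ = t/2 := by
      rw [inv_div]
    simp only [e1, e2, Finset.sum_const, nsmul_eq_mul, mul_one] at key
    -- key : ∑ j ∈ S, |v j| ^ t ≤ (S.card) ^ (1 - t/2) * (∑ j ∈ S, |v j| ^ 2) ^ (t/2)
    have hsum_eq : ∑ j, |v j| ^ t = ∑ j ∈ S, |v j| ^ t := by
      refine (Finset.sum_subset (Finset.subset_univ S) ?_).symm
      intro j _ hj
      have hv0 : v j = 0 := by simpa [hS_def] using hj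
      simp [hv0, Real.zero_rpow (ne_of_gt ht0)]
    have hlp : lpNorm p v = (∑ j, |v j| ^ t) ^ (1/t) := by
      simp [lpNorm, hpx, ht_def]
    rw [hlp, hsum_eq]
    have hsum0 : 0 ≤ ∑ j ∈ S, |v j| ^ t :=
      Finset.sum_nonneg fun j _ => Real.rpow_nonneg (abs_nonneg _) _
    have hcard0 : (0:ℝ) ≤ (S.card : ℝ) := Nat.cast_nonneg _
    calc (∑ j ∈ S, |v j| ^ t) ^ ((1:ℝ)/t)
        ≤ ((S.card : ℝ) ^ (1 - t/2) * A ^ (t/2)) ^ ((1:ℝ)/t) := by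
          apply Real.rpow_le_rpow hsum0 _ (by positivity)
          rw [hAS]; exact key
      _ = (S.card : ℝ) ^ ((1 - t/2) * (1/t)) * A ^ ((t/2) * (1/t)) := by
          rw [Real.mul_rpow (Real.rpow_nonneg hcard0 _) (Real.rpow_nonneg hA0 _),
            ← Real.rpow_mul hcard0, ← Real.rpow_mul hA0]
      _ = (S.card : ℝ) ^ (1/t - 1/2) * B := by
          have htne : t ≠ 0 := ne_of_gt ht0
          have e3 : (1 - t/2) * (1/t) = 1/t - 1/2 := by
            field_simp
          have e4 : (t/2) * (1/t) = 1/2 := by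
            field_simp
          rw [hB_def, e3, e4]
      _ ≤ (s:ℝ) ^ (1/t - 1/2) * B := by
          apply mul_le_mul_of_nonneg_right _ hB0
          apply Real.rpow_le_rpow hcard0 hScard
          have htne : t ≠ 0 := ne_of_gt ht0
          have : 1/t - 1/2 = (2 - t) / (2*t) := by
            field_simp
          rw [this]
          exact div_nonneg (by linarith) (by positivity)
  -- claim Q
  have hQ : lpNorm q v ≤ D ^ (2/t - 1) * B ^ (2 - 2/t) := by
    rcases eq_or_ne q ∞ with hq | hq
    · -- q = ∞, so p = 1, t = 1
      have hp_one : p = 1 := by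
        rw [hq] at hpq
        simp only [ENNReal.div_top, add_zero] at hpq
        rw [ENNReal.div_eq_one_iff] at hpq
        · exact hpq.symm
        · intro h; rw [h] at hp1; exact (by simp : ¬ ((1:ℝ≥0∞) ≤ 0)) hp1
        · exact hpx
      have ht_one : t = 1 := by rw [ht_def, hp_one]; simp
      rw [hq, ht_one]
      norm_num
      simp [lpNorm, hD_def]
    · -- q finite
      have hq0 : q ≠ 0 := by
        intro h
        rw [h] at hpq
        simp at hpq
      set u : ℝ := q.toReal with hu_def
      have hu0 : 0 < u := ENNReal.toReal_pos hq0 hq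
      have hconj : 1/t + 1/u = 1 := by
        have hp0 : p ≠ 0 := by
          intro h; rw [h] at hp1; exact (by simp : ¬ ((1:ℝ≥0∞) ≤ 0)) hp1
        have hfin : (1/p + 1/q) ≠ ∞ := by rw [hpq]; simp
        have := congrArg ENNReal.toReal hpq
        rw [ENNReal.toReal_add (by simp [hp0]) (by simp [hq0])] at this
        simpa [one_div, ENNReal.toReal_inv, ht_def, hu_def] using this
      have hu2 : 2 ≤ u := by
        have h1t : 1/t ≥ 1/2 := by
          rw [ge_iff_le, div_le_div_iff₀ (by norm_num) ht0]
          linarith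
        have h1u : 1/u ≤ 1/2 := by linarith
        rw [div_le_div_iff₀ hu0 (by norm_num)] at h1u
        linarith
      have hpt : ∀ j, |v j| ^ u ≤ D ^ (u - 2) * |v j| ^ (2:ℝ) := by
        intro j
        rcases eq_or_ne (v j) 0 with h | h
        · simp [h, Real.zero_rpow (ne_of_gt hu0),
            Real.zero_rpow (by norm_num : (2:ℝ) ≠ 0)]
        · have hpos : 0 < |v j| := abs_pos.mpr h
          have : |v j| ^ u = |v j| ^ (u - 2) * |v j| ^ (2:ℝ) := by
            rw [← Real.rpow_add hpos]; ring_nf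
          rw [this]
          apply mul_le_mul_of_nonneg_right _ (Real.rpow_nonneg (abs_nonneg _) _)
          exact Real.rpow_le_rpow (abs_nonneg _) (hvD j) (by linarith)
      have hsum : ∑ j, |v j| ^ u ≤ D ^ (u - 2) * A := by
        rw [hA_def, Finset.mul_sum]
        exact Finset.sum_le_sum fun j _ => hpt j
      have hlq : lpNorm q v = (∑ j, |v j| ^ u) ^ (1/u) := by
        simp [lpNorm, hq, hu_def]
      rw [hlq]
      have hsum0 : 0 ≤ ∑ j, |v j| ^ u :=
        Finset.sum_nonneg fun j _ => Real.rpow_nonneg (abs_nonneg _) _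
      calc (∑ j, |v j| ^ u) ^ ((1:ℝ)/u)
          ≤ (D ^ (u - 2) * A) ^ ((1:ℝ)/u) :=
            Real.rpow_le_rpow hsum0 hsum (by positivity)
        _ = D ^ ((u - 2) * (1/u)) * A ^ ((1:ℝ)/u) := by
            rw [Real.mul_rpow (Real.rpow_nonneg hD0 _) hA0, ← Real.rpow_mul hD0]
        _ = D ^ (2/t - 1) * B ^ (2 - 2/t) := by
            have hune : u ≠ 0 := ne_of_gt hu0
            have htne : t ≠ 0 := ne_of_gt ht0
            have eu : 2/u = 2 - 2/t := by
              have h' : 1/u = 1 - 1/t := by linarith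
              rw [show (2:ℝ)/u = 2*(1/u) from by ring,
                show (2:ℝ)/t = 2*(1/t) from by ring, h']
              ring
            congr 1
            · congr 1
              have : (u - 2) * (1/u) = 1 - 2/u := by field_simp
              rw [this, eu]; ring
            · rw [hB_def, ← Real.rpow_mul hA0]
              congr 1
              rw [← eu]
              field_simp
  -- combine
  have htne : t ≠ 0 := ne_of_gt ht0
  have he0 : 0 ≤ 2/t - 1 := by
    have : (1:ℝ) ≤ 2/t := by rw [le_div_iff₀ ht0]; linarith
    linarith
  have he1 : 2/t - 1 ≤ 1 := by
    have : 2/t ≤ 2 := by rw [div_le_iff₀ ht0]; linarith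
    linarith
  have hb3 : (0:ℝ) ≤ 3 - 2/t := by
    have : 2/t ≤ 2 := by rw [div_le_iff₀ ht0]; linarith
    linarith
  have hlq0 : 0 ≤ lpNorm q v := by
    unfold lpNorm
    split
    · exact Real.iSup_nonneg fun j => abs_nonneg _
    · exact Real.rpow_nonneg
        (Finset.sum_nonneg fun j _ => Real.rpow_nonneg (abs_nonneg _) _) _
  have hlp0 : 0 ≤ lpNorm p v := by
    unfold lpNorm
    split
    · exact Real.iSup_nonneg fun j => abs_nonneg _
    · exact Real.rpow_nonneg
        (Finset.sum_nonneg fun j _ => Real.rpow_nonneg (abs_nonneg _) _) _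
  have step1 : lpNorm p v * lpNorm q v ≤
      ((s:ℝ) ^ (1/t - 1/2) * B) * (D ^ (2/t - 1) * B ^ (2 - 2/t)) := by
    apply mul_le_mul hP hQ hlq0
    positivity
  have hD' : D ^ (2/t - 1) ≤ (C * (s:ℝ) ^ (-(1:ℝ)/2)) ^ (2/t - 1) :=
    Real.rpow_le_rpow hD0 hDC he0
  have step2 : ((s:ℝ) ^ (1/t - 1/2) * B) * (D ^ (2/t - 1) * B ^ (2 - 2/t)) ≤
      ((s:ℝ) ^ (1/t - 1/2) * B) * ((C * (s:ℝ) ^ (-(1:ℝ)/2)) ^ (2/t - 1) * B ^ (2 - 2/t)) := by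
    apply mul_le_mul_of_nonneg_left _ (by positivity)
    exact mul_le_mul_of_nonneg_right hD' (Real.rpow_nonneg hB0 _)
  have step3 : ((s:ℝ) ^ (1/t - 1/2) * B) * ((C * (s:ℝ) ^ (-(1:ℝ)/2)) ^ (2/t - 1) * B ^ (2 - 2/t))
      = C ^ (2/t - 1) * B ^ (3 - 2/t) := by
    rw [Real.mul_rpow hC.le (Real.rpow_nonneg hs0.le _), ← Real.rpow_mul hs0.le]
    have hne : (1:ℝ) + (2 - 2/t) ≠ 0 := by
      have h2t : 2/t ≤ 2 := by rw [div_le_iff₀ ht0]; linarith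
      intro h; linarith
    have hBmul : B * B ^ (2 - 2/t) = B ^ (3 - 2/t) := by
      rw [show (3:ℝ) - 2/t = 1 + (2 - 2/t) from by ring,
        Real.rpow_add' hB0 hne, Real.rpow_one]
    have hsmul : (s:ℝ) ^ (1/t - 1/2) * (s:ℝ) ^ (-(1:ℝ)/2 * (2/t - 1)) = 1 := by
      rw [← Real.rpow_add hs0,
        show (1/t - 1/2) + (-(1:ℝ)/2 * (2/t - 1)) = 0 from by ring, Real.rpow_zero]
    calc (s:ℝ) ^ (1/t - 1/2) * B * (C ^ (2/t - 1) * (s:ℝ) ^ (-(1:ℝ)/2 * (2/t - 1)) * B ^ (2 - 2/t))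
        = C ^ (2/t - 1) * ((s:ℝ) ^ (1/t - 1/2) * (s:ℝ) ^ (-(1:ℝ)/2 * (2/t - 1))) *
          (B * B ^ (2 - 2/t)) := by ring
      _ = C ^ (2/t - 1) * B ^ (3 - 2/t) := by rw [hsmul, hBmul, mul_one]
  have final : C ^ (2/t - 1) * B ^ (3 - 2/t) ≤ C := by
    rcases le_total C 1 with hC1 | hC1
    · have hB3 : B ^ (3 - 2/t) ≤ C ^ (3 - 2/t) := Real.rpow_le_rpow hB0 hBC hb3
      calc C ^ (2/t - 1) * B ^ (3 - 2/t) ≤ C ^ (2/t - 1) * C ^ (3 - 2/t) :=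
            mul_le_mul_of_nonneg_left hB3 (Real.rpow_nonneg hC.le _)
        _ = C ^ ((2/t - 1) + (3 - 2/t)) := (Real.rpow_add hC _ _).symm
        _ = C ^ (2:ℝ) := by norm_num
        _ ≤ C ^ (1:ℝ) := Real.rpow_le_rpow_of_exponent_ge hC hC1 (by norm_num)
        _ = C := Real.rpow_one C
    · have hB3 : B ^ (3 - 2/t) ≤ 1 := by
        calc B ^ (3 - 2/t) ≤ 1 ^ (3 - 2/t) := Real.rpow_le_rpow hB0 hB1 hb3
          _ = 1 := Real.one_rpow _
      calc C ^ (2/t - 1) * B ^ (3 - 2/t) ≤ C ^ (2/t - 1) * 1 :=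
            mul_le_mul_of_nonneg_left hB3 (Real.rpow_nonneg hC.le _)
        _ = C ^ (2/t - 1) := mul_one _
        _ ≤ C ^ (1:ℝ) := Real.rpow_le_rpow_of_exponent_le hC1 he1
        _ = C := Real.rpow_one C
  calc lpNorm p v * lpNorm q v
      ≤ ((s:ℝ) ^ (1/t - 1/2) * B) * (D ^ (2/t - 1) * B ^ (2 - 2/t)) := step1
    _ ≤ ((s:ℝ) ^ (1/t - 1/2) * B) * ((C * (s:ℝ) ^ (-(1:ℝ)/2)) ^ (2/t - 1) * B ^ (2 - 2/t)) := step2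
    _ = C ^ (2/t - 1) * B ^ (3 - 2/t) := step3
    _ ≤ C := final
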